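/- Let H be a bialgebra over a commutative ring k, A a right H-comodule algebra, B = A^{co H}, and N a B-module that is finitely generated and projective. Then the unit map u_N : N → (N ⊗_B A)^{co H}, u_N(n) = n ⊗ 1, is an isomorphism. Consequently, if N ⊗_B A ≅ A as relative Hopf modules, then N ≅ B as B-modules; i.e., the map j : Pic(B) → Pic^H(A), j([N]) = {N⊗_B A}, is injective. -/

import Mathlib

open TensorProduct

set_option maxHeartbeats 1000000
set_option synthInstance.maxHeartbeats 400000

universe u

/-- A commutative right `H`-comodule algebra: a commutative `k`-algebra `A` together with
a coassociative counital coaction `ρ : A → A ⊗ H` which is an algebra map. -/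
structure ComodAlg (k H A : Type u) [CommRing k] [Ring H] [Bialgebra k H]
    [CommRing A] [Algebra k A] : Type u where
  ρ : A →ₐ[k] A ⊗[k] H
  counit_comp : ∀ a : A,
    (TensorProduct.rid k A) ((LinearMap.lTensor A (Coalgebra.counit (R := k) (A := H))) (ρ a)) = a
  coassoc : ∀ a : A,
    (LinearMap.lTensor A (Coalgebra.comul (R := k) (A := H))) (ρ a)
      = (TensorProduct.assoc k A H H) ((LinearMap.rTensor H ρ.toLinearMap) (ρ a))

namespace ComodAlg

variable {k H A : Type u} [CommRing k] [Ring H] [Bialgebra k H]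
  [CommRing A] [Algebra k A] (c : ComodAlg k H A)

/-- The subset of coinvariant elements `B = A^{co H}`. -/
def coinvSet : Set A := {a : A | c.ρ a = a ⊗ₜ[k] 1}

/-- The coinvariants `B = A^{co H}` as a subalgebra of `A`. -/
def coinvAlg : Subalgebra k A where
  carrier := c.coinvSet
  mul_mem' {a} {b} ha hb := by
    simp only [coinvSet, Set.mem_setOf_eq] at *
    rw [map_mul, ha, hb, Algebra.TensorProduct.tmul_mul_tmul, mul_one]
  add_mem' {a} {b} ha hb := by
    simp only [coinvSet, Set.mem_setOf_eq] at *
    rw [map_add, ha, hb, ← add_tmul]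
  algebraMap_mem' r := by
    simp only [coinvSet, Set.mem_setOf_eq, AlgHom.commutes,
      Algebra.TensorProduct.algebraMap_apply]

end ComodAlg

namespace ComodAlg

variable {k H A : Type u} [CommRing k] [Ring H] [Bialgebra k H]
  [CommRing A] [Algebra k A] (c : ComodAlg k H A)

/-- The coaction `ρ : A → A ⊗ H`, viewed as a `B`-linear map for `B = A^{co H}`. -/
noncomputable def rhoB : A →ₗ[↥c.coinvAlg] A ⊗[k] H where
  toFun := c.ρ
  map_add' := map_add _
  map_smul' := fun b a => by
    rcases b with ⟨b, hb⟩
    have hb' : c.ρ b = b ⊗ₜ[k] 1 := hb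
    simp only [RingHom.id_apply]
    rw [show (⟨b, hb⟩ : ↥c.coinvAlg) • a = b * a from rfl, map_mul, hb']
    show _ = b • c.ρ a
    rw [Algebra.smul_def, Algebra.TensorProduct.algebraMap_apply]
    simp

/-- The inclusion `A → A ⊗ H`, `a ↦ a ⊗ 1`, as a `B`-linear map. -/
noncomputable def incB : A →ₗ[↥c.coinvAlg] A ⊗[k] H where
  toFun := fun a => a ⊗ₜ[k] 1
  map_add' := fun a a' => TensorProduct.add_tmul a a' 1
  map_smul' := fun b a => by
    simp only [RingHom.id_apply]
    rw [show b • a = (↑b : A) * a from rfl]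
    show _ = (↑b : A) • (a ⊗ₜ[k] (1 : H))
    rw [Algebra.smul_def, Algebra.TensorProduct.algebraMap_apply,
      Algebra.TensorProduct.tmul_mul_tmul, one_mul]
    simp

/-- The induced coaction on `N ⊗_B A` (expressed with values in `N ⊗_B (A ⊗ H)`). -/
noncomputable def coactInd (N : Type u) [AddCommGroup N] [Module ↥c.coinvAlg N] :
    N ⊗[↥c.coinvAlg] A →ₗ[↥c.coinvAlg] N ⊗[↥c.coinvAlg] (A ⊗[k] H) :=
  LinearMap.lTensor N c.rhoB

end ComodAlg

/-- The contraction map `N ⊗ M → M`, `n ⊗ m ↦ g n • m`, for `g : N →ₗ[R] R`. -/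
noncomputable def auxPsi (R N M : Type u) [CommRing R] [AddCommGroup N] [Module R N]
    [AddCommGroup M] [Module R M] (g : N →ₗ[R] R) : N ⊗[R] M →ₗ[R] M :=
  TensorProduct.lift ((LinearMap.lsmul R M).comp g)

@[simp] lemma auxPsi_tmul (R N M : Type u) [CommRing R] [AddCommGroup N] [Module R N]
    [AddCommGroup M] [Module R M] (g : N →ₗ[R] R) (n : N) (m : M) :
    auxPsi R N M g (n ⊗ₜ m) = g n • m := by
  simp [auxPsi]

open Module in
/-- Dual-basis lemma for finitely generated projective modules. -/
lemma exists_dual_family (R M : Type u) [CommRing R] [AddCommGroup M] [Module R M]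
    [Module.Finite R M] [Module.Projective R M] :
    ∃ (m : ℕ) (x : Fin m → M) (φ : Fin m → (M →ₗ[R] R)),
      ∀ n : M, ∑ i, φ i n • x i = n := by
  obtain ⟨m, f, hf⟩ := Module.Finite.exists_fin' R M
  obtain ⟨s, hs⟩ := Module.projective_lifting_property f LinearMap.id hf
  refine ⟨m, fun i => f (Pi.single i 1), fun i => (LinearMap.proj i).comp s, fun n => ?_⟩
  have h1 : ∑ i, (s n i) • (Pi.single i (1:R) : Fin m → R) = s n := by
    ext j
    simp [Pi.single_apply, Finset.sum_apply]
  calc ∑ i, ((LinearMap.proj i).comp s) n • f (Pi.single i 1)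
      = f (∑ i, s n i • (Pi.single i (1:R) : Fin m → R)) := by
        rw [map_sum]; simp
    _ = f (s n) := by rw [h1]
    _ = n := by simpa using LinearMap.congr_fun hs n

open ComodAlg in
/-- for a finitely generated projective module `N` over `B = A^{co H}`, the
unit map `u_N : N → (N ⊗_B A)^{co H}`, `n ↦ n ⊗ 1`, is an isomorphism: `n ↦ n ⊗ 1` is
injective and its image is exactly the set of coinvariants of `N ⊗_B A`. Consequently, if
`N ⊗_B A ≅ A` as relative Hopf modules (an `A`-linear `H`-colinear isomorphism), then
`N ≅ B` as `B`-modules; that is, `j : Pic(B) → Pic^H(A)` is injective. -/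
theorem unit_iso_of_fg_projective
    {k H A : Type u} [CommRing k] [Ring H] [Bialgebra k H]
    [CommRing A] [Algebra k A] (c : ComodAlg k H A)
    (N : Type u) [AddCommGroup N] [Module k N] [Module ↥c.coinvAlg N]
    [IsScalarTower k ↥c.coinvAlg N]
    [Module.Finite ↥c.coinvAlg N] [Module.Projective ↥c.coinvAlg N] :
    (Function.Injective fun n : N => (n ⊗ₜ[↥c.coinvAlg] (1 : A) : N ⊗[↥c.coinvAlg] A)) ∧
    (∀ x : N ⊗[↥c.coinvAlg] A,
      c.coactInd N x = (LinearMap.lTensor N c.incB) x ↔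
        ∃ n : N, x = n ⊗ₜ[↥c.coinvAlg] (1 : A)) ∧
    ((∃ f : (N ⊗[↥c.coinvAlg] A) ≃ₗ[↥c.coinvAlg] A,
        -- `f` is `A`-linear
        (∀ (a : A) (x : N ⊗[↥c.coinvAlg] A),
          f ((LinearMap.lTensor N (LinearMap.mulLeft ↥c.coinvAlg a)) x) = a * f x) ∧
        -- `f` is `H`-colinear
        (∀ x : N ⊗[↥c.coinvAlg] A,
          c.ρ (f x) =
            (LinearMap.rTensor H ((f : N ⊗[↥c.coinvAlg] A →ₗ[↥c.coinvAlg] A).restrictScalars k))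
              ((TensorProduct.AlgebraTensorModule.assoc k ↥c.coinvAlg ↥c.coinvAlg N A H).symm
                (c.coactInd N x)))) →
      Nonempty (N ≃ₗ[↥c.coinvAlg] ↥c.coinvAlg)) := by
  classical
  have hmem_iff : ∀ a : A, a ∈ c.coinvAlg ↔ c.ρ a = a ⊗ₜ[k] (1:H) := fun a => Iff.rfl
  obtain ⟨m, x, φ, hdual⟩ := exists_dual_family (↥c.coinvAlg) N
  have hinj : Function.Injective
      fun n : N => (n ⊗ₜ[↥c.coinvAlg] (1 : A) : N ⊗[↥c.coinvAlg] A) := by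
    intro n n' h
    have hφ : ∀ i, φ i n = φ i n' := by
      intro i
      have h2 := congrArg (auxPsi (↥c.coinvAlg) N A (φ i)) h
      simp only [auxPsi_tmul] at h2
      have h3 : ((φ i n : A)) * 1 = ((φ i n' : A)) * 1 := h2
      rw [mul_one, mul_one] at h3
      exact Subtype.ext h3
    rw [← hdual n, ← hdual n']
    simp only [hφ]
  have recon : ∀ y : N ⊗[↥c.coinvAlg] A,
      ∑ i, x i ⊗ₜ[↥c.coinvAlg] (auxPsi (↥c.coinvAlg) N A (φ i) y) = y := by
    intro y
    induction y using TensorProduct.induction_on with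
    | zero => simp
    | tmul n a =>
        simp only [auxPsi_tmul]
        rw [show (∑ i, x i ⊗ₜ[↥c.coinvAlg] (φ i n • a))
            = (∑ i, φ i n • x i) ⊗ₜ[↥c.coinvAlg] a by
          rw [TensorProduct.sum_tmul]
          exact Finset.sum_congr rfl fun i _ => (TensorProduct.smul_tmul _ _ _).symm]
        rw [hdual]
    | add y z hy hz =>
        simp only [map_add, TensorProduct.tmul_add, Finset.sum_add_distrib, hy, hz]
  have e1 : ∀ (g : N →ₗ[↥c.coinvAlg] ↥c.coinvAlg) (y : N ⊗[↥c.coinvAlg] A),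
      auxPsi (↥c.coinvAlg) N (A ⊗[k] H) g (c.coactInd N y)
        = c.rhoB (auxPsi (↥c.coinvAlg) N A g y) := by
    intro g y
    induction y using TensorProduct.induction_on with
    | zero => simp [ComodAlg.coactInd]
    | tmul n a =>
        show auxPsi (↥c.coinvAlg) N (A ⊗[k] H) g (LinearMap.lTensor N c.rhoB (n ⊗ₜ a)) = _
        rw [LinearMap.lTensor_tmul, auxPsi_tmul, auxPsi_tmul, map_smul]
    | add y z hy hz => simp only [map_add, hy, hz]
  have e2 : ∀ (g : N →ₗ[↥c.coinvAlg] ↥c.coinvAlg) (y : N ⊗[↥c.coinvAlg] A),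
      auxPsi (↥c.coinvAlg) N (A ⊗[k] H) g (LinearMap.lTensor N c.incB y)
        = (auxPsi (↥c.coinvAlg) N A g y) ⊗ₜ[k] (1:H) := by
    intro g y
    induction y using TensorProduct.induction_on with
    | zero => simp
    | tmul n a =>
        rw [LinearMap.lTensor_tmul]
        show auxPsi (↥c.coinvAlg) N (A ⊗[k] H) g (n ⊗ₜ (a ⊗ₜ[k] (1:H))) = _
        rw [auxPsi_tmul, auxPsi_tmul]
        exact (TensorProduct.smul_tmul' (g n) a (1:H)).symm
    | add y z hy hz => simp only [map_add, hy, hz, TensorProduct.add_tmul]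
  have key : ∀ x0 : N ⊗[↥c.coinvAlg] A,
      c.coactInd N x0 = (LinearMap.lTensor N c.incB) x0 ↔
        ∃ n : N, x0 = n ⊗ₜ[↥c.coinvAlg] (1 : A) := by
    intro x0
    constructor
    · intro hx
      have ha : ∀ i, auxPsi (↥c.coinvAlg) N A (φ i) x0 ∈ c.coinvAlg := by
        intro i
        rw [hmem_iff]
        have h4 := congrArg (auxPsi (↥c.coinvAlg) N (A ⊗[k] H) (φ i)) hx
        rw [e1, e2] at h4
        exact h4
      refine ⟨∑ i, (⟨_, ha i⟩ : ↥c.coinvAlg) • x i, ?_⟩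
      conv_lhs => rw [← recon x0]
      rw [TensorProduct.sum_tmul]
      refine Finset.sum_congr rfl fun i _ => ?_
      rw [TensorProduct.smul_tmul]
      congr 1
      exact (mul_one _).symm
    · rintro ⟨n, rfl⟩
      show LinearMap.lTensor N c.rhoB _ = _
      rw [LinearMap.lTensor_tmul, LinearMap.lTensor_tmul]
      congr 1
      show c.ρ 1 = (1:A) ⊗ₜ[k] (1:H)
      rw [map_one]
      rfl
  refine ⟨hinj, key, ?_⟩
  rintro ⟨f, hA, hρ⟩
  have hassoc : ∀ y : N ⊗[↥c.coinvAlg] A,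
      (TensorProduct.AlgebraTensorModule.assoc k (↥c.coinvAlg) (↥c.coinvAlg) N A H).symm
          ((LinearMap.lTensor N c.incB) y) = y ⊗ₜ[k] (1:H) := by
    intro y
    induction y using TensorProduct.induction_on with
    | zero =>
        simp
        exact LinearEquiv.map_zero _
    | tmul n a =>
        rw [LinearMap.lTensor_tmul]
        show (TensorProduct.AlgebraTensorModule.assoc k (↥c.coinvAlg) (↥c.coinvAlg) N A H).symm
          (n ⊗ₜ (a ⊗ₜ[k] (1:H))) = _
        rw [TensorProduct.AlgebraTensorModule.assoc_symm_tmul]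
    | add y z hy hz =>
        simp only [map_add, hy, hz, TensorProduct.add_tmul]
        exact (LinearEquiv.map_add _ _ _).trans (congrArg₂ (· + ·) hy hz)
  have hmem : ∀ n : N, f (n ⊗ₜ[↥c.coinvAlg] (1:A)) ∈ c.coinvAlg := by
    intro n
    have h1 := hρ (n ⊗ₜ[↥c.coinvAlg] (1:A))
    have hc := (key (n ⊗ₜ[↥c.coinvAlg] (1:A))).mpr ⟨n, rfl⟩
    rw [hc, hassoc, LinearMap.rTensor_tmul] at h1
    rw [hmem_iff]
    exact h1
  let gmap : N →ₗ[↥c.coinvAlg] ↥c.coinvAlg :=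
    { toFun := fun n => ⟨f (n ⊗ₜ[↥c.coinvAlg] (1:A)), hmem n⟩
      map_add' := fun n n' => Subtype.ext (by
        show f ((n + n') ⊗ₜ[↥c.coinvAlg] (1:A))
          = f (n ⊗ₜ[↥c.coinvAlg] (1:A)) + f (n' ⊗ₜ[↥c.coinvAlg] (1:A))
        rw [TensorProduct.add_tmul, map_add])
      map_smul' := fun b n => Subtype.ext (by
        show f ((b • n) ⊗ₜ[↥c.coinvAlg] (1:A)) = (b : A) * f (n ⊗ₜ[↥c.coinvAlg] (1:A))
        rw [← TensorProduct.smul_tmul', map_smul]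
        rfl) }
  have hginj : Function.Injective gmap := by
    intro n n' h
    apply hinj
    show n ⊗ₜ[↥c.coinvAlg] (1:A) = n' ⊗ₜ[↥c.coinvAlg] (1:A)
    apply f.injective
    exact congrArg Subtype.val h
  have hgsurj : Function.Surjective gmap := by
    intro b
    set y := f.symm (b : A) with hy
    have hfy : f y = (b : A) := f.apply_symm_apply _
    have hρb : c.ρ (f y) = f y ⊗ₜ[k] (1:H) := by
      rw [hfy]; exact b.2
    have h1 := hρ y
    have hrinj : Function.Injective (LinearMap.rTensor H
        ((f : N ⊗[↥c.coinvAlg] A →ₗ[↥c.coinvAlg] A).restrictScalars k)) := by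
      have hcomp : (LinearMap.rTensor H
            ((f.symm : A →ₗ[↥c.coinvAlg] N ⊗[↥c.coinvAlg] A).restrictScalars k)).comp
          (LinearMap.rTensor H
            ((f : N ⊗[↥c.coinvAlg] A →ₗ[↥c.coinvAlg] A).restrictScalars k))
            = LinearMap.id := by
        rw [← LinearMap.rTensor_comp]
        have hc2 : ((f.symm : A →ₗ[↥c.coinvAlg] N ⊗[↥c.coinvAlg] A).restrictScalars k).comp
            ((f : N ⊗[↥c.coinvAlg] A →ₗ[↥c.coinvAlg] A).restrictScalars k) = LinearMap.id := by
          ext z; simp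
        rw [hc2, LinearMap.rTensor_id]
      intro u v huv
      have h5 := congrArg (LinearMap.rTensor H
        ((f.symm : A →ₗ[↥c.coinvAlg] N ⊗[↥c.coinvAlg] A).restrictScalars k)) huv
      rwa [← LinearMap.comp_apply, ← LinearMap.comp_apply, hcomp, LinearMap.id_apply,
        LinearMap.id_apply] at h5
    have heq : c.coactInd N y = LinearMap.lTensor N c.incB y := by
      apply (TensorProduct.AlgebraTensorModule.assoc k
        (↥c.coinvAlg) (↥c.coinvAlg) N A H).symm.injective
      apply hrinj
      rw [← h1, hassoc, LinearMap.rTensor_tmul, hρb]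
      rfl
    obtain ⟨n, hn⟩ := (key y).mp heq
    refine ⟨n, Subtype.ext ?_⟩
    show f (n ⊗ₜ[↥c.coinvAlg] (1:A)) = (b : A)
    rw [← hn]
    exact hfy
  exact ⟨LinearEquiv.ofBijective gmap ⟨hginj, hgsurj⟩⟩
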